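/- Let λ₁,λ₂,λ₃,λ₄ ∈ ℝ and let 𝔤 be the 4-dimensional real Lie algebra with orthonormal basis X₁,X₂,X₃,X₄ (inner product g) and brackets [X₁,X₂] = −[X₃,X₄] = λ₁X₁ + λ₂X₂ + λ₃X₃ + λ₄X₄, [X₁,X₃] = [X₂,X₄] = λ₄X₁ − λ₃X₂ + λ₂X₃ − λ₁X₄, [X₂,X₃] = [X₁,X₄] = 0. Define ∇ by 2g(∇ₓy,z) = g([x,y],z) + g([z,x],y) + g([z,y],x), R(x,y,z,w) = g(∇ₓ∇_y z − ∇_y∇ₓ z − ∇_{[x,y]} z, w), and k_{ij} = R(Xᵢ,Xⱼ,Xⱼ,Xᵢ). Then all six basis sectional curvatures k₁₂, k₁₃, k₁₄, k₂₃, k₂₄, k₃₄ are equal if and only if λ₁² = λ₂² = λ₃² = λ₄². -/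

import Mathlib

open scoped RealInnerProductSpace

set_option maxHeartbeats 1000000 in
/-- In the example Lie algebra of the paper, all six basis sectional
curvatures `k₁₂, k₁₃, k₁₄, k₂₃, k₂₄, k₃₄` are equal iff `λ₁² = λ₂² = λ₃² = λ₄²`. -/
theorem statement_14
    (l1 l2 l3 l4 : ℝ)
    (X : Fin 4 → EuclideanSpace ℝ (Fin 4))
    (hX : ∀ i, X i = EuclideanSpace.single i 1)
    (bracket : EuclideanSpace ℝ (Fin 4) →ₗ[ℝ] EuclideanSpace ℝ (Fin 4) →ₗ[ℝ] EuclideanSpace ℝ (Fin 4))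
    (hskew : ∀ x y, bracket x y = - bracket y x)
    (hjacobi : ∀ x y z,
      bracket (bracket x y) z + bracket (bracket y z) x + bracket (bracket z x) y = 0)
    (h12 : bracket (X 0) (X 1) = l1 • X 0 + l2 • X 1 + l3 • X 2 + l4 • X 3)
    (h34 : bracket (X 2) (X 3) = -(l1 • X 0 + l2 • X 1 + l3 • X 2 + l4 • X 3))
    (h13 : bracket (X 0) (X 2) = l4 • X 0 - l3 • X 1 + l2 • X 2 - l1 • X 3)
    (h24 : bracket (X 1) (X 3) = l4 • X 0 - l3 • X 1 + l2 • X 2 - l1 • X 3)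
    (h23 : bracket (X 1) (X 2) = 0)
    (h14 : bracket (X 0) (X 3) = 0)
    (nabla : EuclideanSpace ℝ (Fin 4) → EuclideanSpace ℝ (Fin 4) → EuclideanSpace ℝ (Fin 4))
    (hKoszul : ∀ x y z, 2 * ⟪nabla x y, z⟫
      = ⟪bracket x y, z⟫ + ⟪bracket z x, y⟫ + ⟪bracket z y, x⟫)
    (R : EuclideanSpace ℝ (Fin 4) → EuclideanSpace ℝ (Fin 4) → EuclideanSpace ℝ (Fin 4) → EuclideanSpace ℝ (Fin 4) → ℝ)
    (hR : ∀ x y z w,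
      R x y z w = ⟪nabla x (nabla y z) - nabla y (nabla x z) - nabla (bracket x y) z, w⟫) :
    (R (X 0) (X 1) (X 1) (X 0) = R (X 0) (X 2) (X 2) (X 0) ∧
     R (X 0) (X 2) (X 2) (X 0) = R (X 0) (X 3) (X 3) (X 0) ∧
     R (X 0) (X 3) (X 3) (X 0) = R (X 1) (X 2) (X 2) (X 1) ∧
     R (X 1) (X 2) (X 2) (X 1) = R (X 1) (X 3) (X 3) (X 1) ∧
     R (X 1) (X 3) (X 3) (X 1) = R (X 2) (X 3) (X 3) (X 2))
      ↔ (l1 ^ 2 = l2 ^ 2 ∧ l2 ^ 2 = l3 ^ 2 ∧ l3 ^ 2 = l4 ^ 2) := by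
  -- diagonal brackets vanish
  have hdiag : ∀ x, bracket x x = 0 := by
    intro x
    have h := hskew x x
    have h2 : bracket x x + bracket x x = 0 := by nth_rewrite 1 [h]; simp
    rw [← two_smul ℝ] at h2
    simpa using h2
  have hb00 : bracket (X 0) (X 0) = 0 := hdiag _
  have hb11 : bracket (X 1) (X 1) = 0 := hdiag _
  have hb22 : bracket (X 2) (X 2) = 0 := hdiag _
  have hb33 : bracket (X 3) (X 3) = 0 := hdiag _
  have hb10 : bracket (X 1) (X 0) = -(l1 • X 0 + l2 • X 1 + l3 • X 2 + l4 • X 3) := by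
    rw [hskew, h12]
  have hb20 : bracket (X 2) (X 0) = -(l4 • X 0 - l3 • X 1 + l2 • X 2 - l1 • X 3) := by
    rw [hskew, h13]
  have hb31 : bracket (X 3) (X 1) = -(l4 • X 0 - l3 • X 1 + l2 • X 2 - l1 • X 3) := by
    rw [hskew, h24]
  have hb21 : bracket (X 2) (X 1) = 0 := by rw [hskew, h23, neg_zero]
  have hb30 : bracket (X 3) (X 0) = 0 := by rw [hskew, h14, neg_zero]
  have hb32 : bracket (X 3) (X 2) = l1 • X 0 + l2 • X 1 + l3 • X 2 + l4 • X 3 := by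
    rw [hskew, h34, neg_neg]
  -- extensionality via inner products with the basis
  have hext : ∀ v w : EuclideanSpace ℝ (Fin 4),
      ⟪v, X 0⟫ = ⟪w, X 0⟫ → ⟪v, X 1⟫ = ⟪w, X 1⟫ → ⟪v, X 2⟫ = ⟪w, X 2⟫ →
      ⟪v, X 3⟫ = ⟪w, X 3⟫ → v = w := by
    intro v w h0 h1 h2 h3
    simp only [hX, EuclideanSpace.inner_single_right, starRingEnd_apply, star_trivial,
      one_mul] at h0 h1 h2 h3
    ext k
    fin_cases k <;> assumption
  -- Koszul, solved form
  have hval : ∀ x y z : EuclideanSpace ℝ (Fin 4),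
      ⟪nabla x y, z⟫ = (⟪bracket x y, z⟫ + ⟪bracket z x, y⟫ + ⟪bracket z y, x⟫) / 2 := by
    intro x y z
    have h := hKoszul x y z
    linarith
  -- nabla on the basis
  have ipXX : ∀ i j : Fin 4, ⟪X i, X j⟫ = if i = j then (1:ℝ) else 0 := by
    intro i j
    simp [hX, EuclideanSpace.inner_single_left, EuclideanSpace.single_apply, eq_comm]
  have hnX : ∀ i : Fin 4, ‖X i‖ = 1 := by
    intro i
    simp [hX]
  have n11 : nabla (X 1) (X 1) = l2 • X 0 + l3 • X 3 := by
    apply hext <;>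
      (simp only [hval, hb00, hb11, hb22, hb33, hb10, hb20, hb21, hb30, hb31, hb32, h12, h34, h13, h24, h23, h14, map_add, map_sub, map_smul, map_neg, map_zero, LinearMap.add_apply, LinearMap.sub_apply, LinearMap.smul_apply, LinearMap.neg_apply, LinearMap.zero_apply, smul_zero, neg_zero]
       simp [inner_add_left, inner_sub_left, inner_smul_left, inner_neg_left, inner_zero_left, inner_add_right, inner_sub_right, inner_smul_right, inner_neg_right, inner_zero_right, ipXX, hnX]) <;> ring
  have n22 : nabla (X 2) (X 2) = l2 • X 0 + l3 • X 3 := by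
    apply hext <;>
      (simp only [hval, hb00, hb11, hb22, hb33, hb10, hb20, hb21, hb30, hb31, hb32, h12, h34, h13, h24, h23, h14, map_add, map_sub, map_smul, map_neg, map_zero, LinearMap.add_apply, LinearMap.sub_apply, LinearMap.smul_apply, LinearMap.neg_apply, LinearMap.zero_apply, smul_zero, neg_zero]
       simp [inner_add_left, inner_sub_left, inner_smul_left, inner_neg_left, inner_zero_left, inner_add_right, inner_sub_right, inner_smul_right, inner_neg_right, inner_zero_right, ipXX, hnX]) <;> ring
  have n33 : nabla (X 3) (X 3) = (-l1) • X 1 + (-l4) • X 2 := by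
    apply hext <;>
      (simp only [hval, hb00, hb11, hb22, hb33, hb10, hb20, hb21, hb30, hb31, hb32, h12, h34, h13, h24, h23, h14, map_add, map_sub, map_smul, map_neg, map_zero, LinearMap.add_apply, LinearMap.sub_apply, LinearMap.smul_apply, LinearMap.neg_apply, LinearMap.zero_apply, smul_zero, neg_zero]
       simp [inner_add_left, inner_sub_left, inner_smul_left, inner_neg_left, inner_zero_left, inner_add_right, inner_sub_right, inner_smul_right, inner_neg_right, inner_zero_right, ipXX, hnX]) <;> ring
  have n01 : nabla (X 0) (X 1) = l1 • X 0 + l3 • X 2 := by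
    apply hext <;>
      (simp only [hval, hb00, hb11, hb22, hb33, hb10, hb20, hb21, hb30, hb31, hb32, h12, h34, h13, h24, h23, h14, map_add, map_sub, map_smul, map_neg, map_zero, LinearMap.add_apply, LinearMap.sub_apply, LinearMap.smul_apply, LinearMap.neg_apply, LinearMap.zero_apply, smul_zero, neg_zero]
       simp [inner_add_left, inner_sub_left, inner_smul_left, inner_neg_left, inner_zero_left, inner_add_right, inner_sub_right, inner_smul_right, inner_neg_right, inner_zero_right, ipXX, hnX]) <;> ring
  have n02 : nabla (X 0) (X 2) = l4 • X 0 + (-l3) • X 1 := by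
    apply hext <;>
      (simp only [hval, hb00, hb11, hb22, hb33, hb10, hb20, hb21, hb30, hb31, hb32, h12, h34, h13, h24, h23, h14, map_add, map_sub, map_smul, map_neg, map_zero, LinearMap.add_apply, LinearMap.sub_apply, LinearMap.smul_apply, LinearMap.neg_apply, LinearMap.zero_apply, smul_zero, neg_zero]
       simp [inner_add_left, inner_sub_left, inner_smul_left, inner_neg_left, inner_zero_left, inner_add_right, inner_sub_right, inner_smul_right, inner_neg_right, inner_zero_right, ipXX, hnX]) <;> ring
  have n03 : nabla (X 0) (X 3) = (0 : EuclideanSpace ℝ (Fin 4)) := by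
    apply hext <;>
      (simp only [hval, hb00, hb11, hb22, hb33, hb10, hb20, hb21, hb30, hb31, hb32, h12, h34, h13, h24, h23, h14, map_add, map_sub, map_smul, map_neg, map_zero, LinearMap.add_apply, LinearMap.sub_apply, LinearMap.smul_apply, LinearMap.neg_apply, LinearMap.zero_apply, smul_zero, neg_zero]
       simp [inner_add_left, inner_sub_left, inner_smul_left, inner_neg_left, inner_zero_left, inner_add_right, inner_sub_right, inner_smul_right, inner_neg_right, inner_zero_right, ipXX, hnX]) <;> ring
  have n12 : nabla (X 1) (X 2) = (0 : EuclideanSpace ℝ (Fin 4)) := by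
    apply hext <;>
      (simp only [hval, hb00, hb11, hb22, hb33, hb10, hb20, hb21, hb30, hb31, hb32, h12, h34, h13, h24, h23, h14, map_add, map_sub, map_smul, map_neg, map_zero, LinearMap.add_apply, LinearMap.sub_apply, LinearMap.smul_apply, LinearMap.neg_apply, LinearMap.zero_apply, smul_zero, neg_zero]
       simp [inner_add_left, inner_sub_left, inner_smul_left, inner_neg_left, inner_zero_left, inner_add_right, inner_sub_right, inner_smul_right, inner_neg_right, inner_zero_right, ipXX, hnX]) <;> ring
  have n13 : nabla (X 1) (X 3) = l4 • X 0 + (-l3) • X 1 := by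
    apply hext <;>
      (simp only [hval, hb00, hb11, hb22, hb33, hb10, hb20, hb21, hb30, hb31, hb32, h12, h34, h13, h24, h23, h14, map_add, map_sub, map_smul, map_neg, map_zero, LinearMap.add_apply, LinearMap.sub_apply, LinearMap.smul_apply, LinearMap.neg_apply, LinearMap.zero_apply, smul_zero, neg_zero]
       simp [inner_add_left, inner_sub_left, inner_smul_left, inner_neg_left, inner_zero_left, inner_add_right, inner_sub_right, inner_smul_right, inner_neg_right, inner_zero_right, ipXX, hnX]) <;> ring
  have n23 : nabla (X 2) (X 3) = (-l1) • X 0 + (-l3) • X 2 := by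
    apply hext <;>
      (simp only [hval, hb00, hb11, hb22, hb33, hb10, hb20, hb21, hb30, hb31, hb32, h12, h34, h13, h24, h23, h14, map_add, map_sub, map_smul, map_neg, map_zero, LinearMap.add_apply, LinearMap.sub_apply, LinearMap.smul_apply, LinearMap.neg_apply, LinearMap.zero_apply, smul_zero, neg_zero]
       simp [inner_add_left, inner_sub_left, inner_smul_left, inner_neg_left, inner_zero_left, inner_add_right, inner_sub_right, inner_smul_right, inner_neg_right, inner_zero_right, ipXX, hnX]) <;> ring
  have k12 : R (X 0) (X 1) (X 1) (X 0) = -l1^2 - l2^2 := by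
    rw [hR, n11, n01, h12, inner_sub_left, inner_sub_left]
    simp only [hval, map_add, map_sub, map_smul, map_neg, map_zero, LinearMap.add_apply, LinearMap.sub_apply, LinearMap.smul_apply, LinearMap.neg_apply, LinearMap.zero_apply, smul_zero, neg_zero]
    simp only [hb00, hb11, hb22, hb33, hb10, hb20, hb21, hb30, hb31, hb32, h12, h34, h13, h24, h23, h14, map_add, map_sub, map_smul, map_neg, map_zero, LinearMap.add_apply, LinearMap.sub_apply, LinearMap.smul_apply, LinearMap.neg_apply, LinearMap.zero_apply, smul_zero, neg_zero]
    simp [inner_add_left, inner_sub_left, inner_smul_left, inner_neg_left, inner_zero_left, inner_add_right, inner_sub_right, inner_smul_right, inner_neg_right, inner_zero_right, ipXX, hnX, -inner_self_eq_norm_sq_to_K]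
    ring
  have k13 : R (X 0) (X 2) (X 2) (X 0) = -l2^2 - l4^2 := by
    rw [hR, n22, n02, h13, inner_sub_left, inner_sub_left]
    simp only [hval, map_add, map_sub, map_smul, map_neg, map_zero, LinearMap.add_apply, LinearMap.sub_apply, LinearMap.smul_apply, LinearMap.neg_apply, LinearMap.zero_apply, smul_zero, neg_zero]
    simp only [hb00, hb11, hb22, hb33, hb10, hb20, hb21, hb30, hb31, hb32, h12, h34, h13, h24, h23, h14, map_add, map_sub, map_smul, map_neg, map_zero, LinearMap.add_apply, LinearMap.sub_apply, LinearMap.smul_apply, LinearMap.neg_apply, LinearMap.zero_apply, smul_zero, neg_zero]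
    simp [inner_add_left, inner_sub_left, inner_smul_left, inner_neg_left, inner_zero_left, inner_add_right, inner_sub_right, inner_smul_right, inner_neg_right, inner_zero_right, ipXX, hnX, -inner_self_eq_norm_sq_to_K]
    ring
  have k14 : R (X 0) (X 3) (X 3) (X 0) = -l1^2 - l4^2 := by
    rw [hR, n33, n03, h14, inner_sub_left, inner_sub_left]
    simp only [hval, map_add, map_sub, map_smul, map_neg, map_zero, LinearMap.add_apply, LinearMap.sub_apply, LinearMap.smul_apply, LinearMap.neg_apply, LinearMap.zero_apply, smul_zero, neg_zero]
    simp only [hb00, hb11, hb22, hb33, hb10, hb20, hb21, hb30, hb31, hb32, h12, h34, h13, h24, h23, h14, map_add, map_sub, map_smul, map_neg, map_zero, LinearMap.add_apply, LinearMap.sub_apply, LinearMap.smul_apply, LinearMap.neg_apply, LinearMap.zero_apply, smul_zero, neg_zero]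
    simp [inner_add_left, inner_sub_left, inner_smul_left, inner_neg_left, inner_zero_left, inner_add_right, inner_sub_right, inner_smul_right, inner_neg_right, inner_zero_right, ipXX, hnX, -inner_self_eq_norm_sq_to_K]
    ring
  have k23 : R (X 1) (X 2) (X 2) (X 1) = -l2^2 - l3^2 := by
    rw [hR, n22, n12, h23, inner_sub_left, inner_sub_left]
    simp only [hval, map_add, map_sub, map_smul, map_neg, map_zero, LinearMap.add_apply, LinearMap.sub_apply, LinearMap.smul_apply, LinearMap.neg_apply, LinearMap.zero_apply, smul_zero, neg_zero]
    simp only [hb00, hb11, hb22, hb33, hb10, hb20, hb21, hb30, hb31, hb32, h12, h34, h13, h24, h23, h14, map_add, map_sub, map_smul, map_neg, map_zero, LinearMap.add_apply, LinearMap.sub_apply, LinearMap.smul_apply, LinearMap.neg_apply, LinearMap.zero_apply, smul_zero, neg_zero]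
    simp [inner_add_left, inner_sub_left, inner_smul_left, inner_neg_left, inner_zero_left, inner_add_right, inner_sub_right, inner_smul_right, inner_neg_right, inner_zero_right, ipXX, hnX, -inner_self_eq_norm_sq_to_K]
    ring
  have k24 : R (X 1) (X 3) (X 3) (X 1) = -l1^2 - l3^2 := by
    rw [hR, n33, n13, h24, inner_sub_left, inner_sub_left]
    simp only [hval, map_add, map_sub, map_smul, map_neg, map_zero, LinearMap.add_apply, LinearMap.sub_apply, LinearMap.smul_apply, LinearMap.neg_apply, LinearMap.zero_apply, smul_zero, neg_zero]
    simp only [hb00, hb11, hb22, hb33, hb10, hb20, hb21, hb30, hb31, hb32, h12, h34, h13, h24, h23, h14, map_add, map_sub, map_smul, map_neg, map_zero, LinearMap.add_apply, LinearMap.sub_apply, LinearMap.smul_apply, LinearMap.neg_apply, LinearMap.zero_apply, smul_zero, neg_zero]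
    simp [inner_add_left, inner_sub_left, inner_smul_left, inner_neg_left, inner_zero_left, inner_add_right, inner_sub_right, inner_smul_right, inner_neg_right, inner_zero_right, ipXX, hnX, -inner_self_eq_norm_sq_to_K]
    ring
  have k34 : R (X 2) (X 3) (X 3) (X 2) = -l3^2 - l4^2 := by
    rw [hR, n33, n23, h34, inner_sub_left, inner_sub_left]
    simp only [hval, map_add, map_sub, map_smul, map_neg, map_zero, LinearMap.add_apply, LinearMap.sub_apply, LinearMap.smul_apply, LinearMap.neg_apply, LinearMap.zero_apply, smul_zero, neg_zero]
    simp only [hb00, hb11, hb22, hb33, hb10, hb20, hb21, hb30, hb31, hb32, h12, h34, h13, h24, h23, h14, map_add, map_sub, map_smul, map_neg, map_zero, LinearMap.add_apply, LinearMap.sub_apply, LinearMap.smul_apply, LinearMap.neg_apply, LinearMap.zero_apply, smul_zero, neg_zero]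
    simp [inner_add_left, inner_sub_left, inner_smul_left, inner_neg_left, inner_zero_left, inner_add_right, inner_sub_right, inner_smul_right, inner_neg_right, inner_zero_right, ipXX, hnX, -inner_self_eq_norm_sq_to_K]
    ring
  rw [k12, k13, k14, k23, k24, k34]
  constructor
  · rintro ⟨e1, e2, e3, e4, e5⟩
    exact ⟨by linarith, by linarith, by linarith⟩
  · rintro ⟨e1, e2, e3⟩
    exact ⟨by linarith, by linarith, by linarith, by linarith, by linarith⟩
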